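/- The convex hull of the Hashin–Shtrikman feasible set equals the Voigt feasible set: in the product space of volume fractions and Kelvin–Mandel elasticity matrices, convexHull(F_HS) = F_V. -/

import Mathlib

open Real

/-- The square root `s = √(1 - t²)`. -/
noncomputable def sHS (t : ℝ) : ℝ := Real.sqrt (1 - t ^ 2)

/-- The Hashin–Shtrikman correction term `q(t; v)` for two well-ordered isotropic
plane-stress phases with bulk moduli `κm < κp` and shear moduli `μm < μp`. -/
noncomputable def qHS (κm κp μm μp t v : ℝ) : ℝ :=
  if v * (κp - κm) * t ≤ (κp + μp - (κp - κm) * v) * sHS t ∧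
     v * (μp - μm) * sHS t ≤ (κp + μp - (μp - μm) * v) * t then
    v * (1 - v) * ((κp - κm) * t - (μp - μm) * sHS t) ^ 2 /
      (κp + μp - ((κp - κm) + (μp - μm)) * v)
  else if (κp + μp - (κp - κm) * v) * sHS t < v * (κp - κm) * t then
    (1 - v) * (v * (κp - κm) ^ 2 * t ^ 2 / (κp + μp - (κp - κm) * v)
      - (μp - μm) * (sHS t) ^ 2)
  else
    (1 - v) * (v * (μp - μm) ^ 2 * (sHS t) ^ 2 / (κp + μp - (μp - μm) * v)
      - (κp - κm) * t ^ 2)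

/-- The Hashin–Shtrikman upper-bound function `f^HS(t; v)`:
the Voigt energy minus the correction `q(t; v)`. -/
noncomputable def fHS (κm κp μm μp t v : ℝ) : ℝ :=
  (κm + v * (κp - κm)) * t ^ 2 + (μm + v * (μp - μm)) * (1 - t ^ 2)
    - qHS κm κp μm μp t v

open Matrix

/-- Kelvin–Mandel matrix of the isotropic plane-stress elasticity tensor with
bulk modulus `κ` and shear modulus `μ`. -/
noncomputable def KM (κ μ : ℝ) : Matrix (Fin 3) (Fin 3) ℝ :=
  !![κ + μ, κ - μ, 0; κ - μ, κ + μ, 0; 0, 0, 2 * μ]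

/-- The Hashin–Shtrikman feasible set in the product space of volume fractions
and Kelvin–Mandel elasticity matrices. -/
noncomputable def FHS (κm κp μm μp : ℝ) : Set (ℝ × Matrix (Fin 3) (Fin 3) ℝ) :=
  {p | p.1 ∈ Set.Icc (0 : ℝ) 1 ∧ p.2.IsSymm ∧ (p.2 - KM κm μm).PosSemidef ∧
    ∀ e : Fin 3 → ℝ, (e 0) ^ 2 + (e 1) ^ 2 + (e 2) ^ 2 = 1 / 2 →
      dotProduct e (p.2.mulVec e) ≤ fHS κm κp μm μp (abs (e 0 + e 1)) p.1}

/-- The Voigt feasible set in the product space of volume fractions and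
Kelvin–Mandel elasticity matrices. -/
noncomputable def FV (κm κp μm μp : ℝ) : Set (ℝ × Matrix (Fin 3) (Fin 3) ℝ) :=
  {p | p.1 ∈ Set.Icc (0 : ℝ) 1 ∧ p.2.IsSymm ∧ (p.2 - KM κm μm).PosSemidef ∧
    ((1 - p.1) • KM κm μm + p.1 • KM κp μp - p.2).PosSemidef}

lemma qHS_nonneg (κm κp μm μp t v : ℝ) (hκm : 0 < κm) (hκ : κm < κp)
    (hμm : 0 < μm) (hμ : μm < μp) (ht0 : 0 ≤ t) (ht1 : t ≤ 1)
    (hv0 : 0 ≤ v) (hv1 : v ≤ 1) : 0 ≤ qHS κm κp μm μp t v := by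
  have hs0 : 0 ≤ sHS t := Real.sqrt_nonneg _
  have hs2 : (sHS t) ^ 2 = 1 - t ^ 2 := Real.sq_sqrt (by nlinarith)
  set s := sHS t with hs
  clear_value s
  have hd1 : 0 < κp + μp - ((κp - κm) + (μp - μm)) * v := by nlinarith
  have hd2 : 0 < κp + μp - (κp - κm) * v := by nlinarith
  have hd3 : 0 < κp + μp - (μp - μm) * v := by nlinarith
  unfold qHS
  rw [← hs]
  split_ifs with h1 h2
  · exact div_nonneg (mul_nonneg (mul_nonneg hv0 (by linarith)) (sq_nonneg _)) hd1.le
  · -- d2 * s < v * Δκ * t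
    have hsq : ((κp + μp - (κp - κm) * v) * s)^2 ≤ (v * (κp - κm) * t)^2 := by
      nlinarith [mul_nonneg hd2.le hs0]
    have h4 : (μp - μm) * (((κp + μp - (κp - κm) * v) * s)^2)
        ≤ (μp - μm) * ((v * (κp - κm) * t)^2) :=
      mul_le_mul_of_nonneg_left hsq (by linarith)
    have h5a : (0:ℝ) ≤ (κp + μp - (κp - κm) * v) - v * (μp - μm) := by linarith
    have h5b : (0:ℝ) ≤ v * (κp - κm)^2 * t^2 :=
      mul_nonneg (mul_nonneg hv0 (sq_nonneg _)) (sq_nonneg _)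
    have h5 : 0 ≤ ((κp + μp - (κp - κm) * v) - v * (μp - μm)) * (v * (κp - κm)^2 * t^2) :=
      mul_nonneg h5a h5b
    have key : (μp - μm) * s ^ 2 ≤ v * (κp - κm) ^ 2 * t ^ 2 / (κp + μp - (κp - κm) * v) := by
      rw [le_div_iff₀ hd2]
      have G2 : (μp - μm) * s ^ 2 * (κp + μp - (κp - κm) * v) * (κp + μp - (κp - κm) * v)
          ≤ v * (κp - κm) ^ 2 * t ^ 2 * (κp + μp - (κp - κm) * v) := by linarith [h4, h5]
      exact le_of_mul_le_mul_right G2 hd2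
    have : 0 ≤ v * (κp - κm) ^ 2 * t ^ 2 / (κp + μp - (κp - κm) * v)
        - (μp - μm) * s ^ 2 := by linarith
    exact mul_nonneg (by linarith) this
  · push_neg at h1 h2
    have hB : (κp + μp - (μp - μm) * v) * t < v * (μp - μm) * s := h1 h2
    have hsq : ((κp + μp - (μp - μm) * v) * t)^2 ≤ (v * (μp - μm) * s)^2 := by
      nlinarith [mul_nonneg hd3.le ht0]
    have h4 : (κp - κm) * (((κp + μp - (μp - μm) * v) * t)^2)
        ≤ (κp - κm) * ((v * (μp - μm) * s)^2) :=
      mul_le_mul_of_nonneg_left hsq (by linarith)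
    have h5a : (0:ℝ) ≤ (κp + μp - (μp - μm) * v) - v * (κp - κm) := by linarith
    have h5b : (0:ℝ) ≤ v * (μp - μm)^2 * s^2 :=
      mul_nonneg (mul_nonneg hv0 (sq_nonneg _)) (sq_nonneg _)
    have h5 : 0 ≤ ((κp + μp - (μp - μm) * v) - v * (κp - κm)) * (v * (μp - μm)^2 * s^2) :=
      mul_nonneg h5a h5b
    have key : (κp - κm) * t ^ 2 ≤ v * (μp - μm) ^ 2 * s ^ 2 / (κp + μp - (μp - μm) * v) := by
      rw [le_div_iff₀ hd3]
      have G2 : (κp - κm) * t ^ 2 * (κp + μp - (μp - μm) * v) * (κp + μp - (μp - μm) * v)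
          ≤ v * (μp - μm) ^ 2 * s ^ 2 * (κp + μp - (μp - μm) * v) := by linarith [h4, h5]
      exact le_of_mul_le_mul_right G2 hd3
    have : 0 ≤ v * (μp - μm) ^ 2 * s ^ 2 / (κp + μp - (μp - μm) * v)
        - (κp - κm) * t ^ 2 := by linarith
    exact mul_nonneg (by linarith) this


lemma qHS_zero (κm κp μm μp t : ℝ) (hκ : κm < κp) (hμ : μm < μp)
    (hκm : 0 < κm) (hμm : 0 < μm) (ht0 : 0 ≤ t) :
    qHS κm κp μm μp t 0 = 0 := by
  have hs0 : 0 ≤ sHS t := Real.sqrt_nonneg _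
  unfold qHS
  rw [if_pos]
  · ring
  constructor
  · simpa using mul_nonneg (by nlinarith : (0:ℝ) ≤ κp + μp - (κp - κm) * 0) hs0
  · simpa using mul_nonneg (by nlinarith : (0:ℝ) ≤ κp + μp - (μp - μm) * 0) ht0

lemma qHS_one (κm κp μm μp t : ℝ) : qHS κm κp μm μp t 1 = 0 := by
  unfold qHS
  split_ifs <;> norm_num

lemma symm_isHermitian {M : Matrix (Fin 3) (Fin 3) ℝ} (h : M.IsSymm) :
    M.IsHermitian := by
  exact Matrix.isHermitian_iff_isSymm.mpr h

lemma KM_isSymm (κ μ : ℝ) : (KM κ μ).IsSymm := by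
  unfold Matrix.IsSymm KM
  ext i j
  fin_cases i <;> fin_cases j <;> simp

lemma quad_KM (κ μ : ℝ) (e : Fin 3 → ℝ) :
    dotProduct e ((KM κ μ) *ᵥ e) =
      κ * (e 0 + e 1)^2 + μ * ((e 0 - e 1)^2 + 2 * (e 2)^2) := by
  simp [KM, dotProduct, Matrix.mulVec, Fin.sum_univ_three]
  ring

lemma psd_of (M : Matrix (Fin 3) (Fin 3) ℝ) (h1 : M.IsSymm)
    (h2 : ∀ x : Fin 3 → ℝ, 0 ≤ dotProduct x (M *ᵥ x)) : M.PosSemidef :=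
  Matrix.PosSemidef.of_dotProduct_mulVec_nonneg (symm_isHermitian h1) (fun x => by simpa using h2 x)

lemma psd_quad {M : Matrix (Fin 3) (Fin 3) ℝ} (h : M.PosSemidef) (x : Fin 3 → ℝ) :
    0 ≤ dotProduct x (M *ᵥ x) := by simpa using h.dotProduct_mulVec_nonneg x

lemma psd_symm {M : Matrix (Fin 3) (Fin 3) ℝ} (h : M.PosSemidef) : M.IsSymm := by
  exact Matrix.isHermitian_iff_isSymm.mp h.1

lemma psd_smul {M : Matrix (Fin 3) (Fin 3) ℝ} (h : M.PosSemidef) {c : ℝ}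
    (hc : 0 ≤ c) : (c • M).PosSemidef := by
  apply psd_of
  · rw [Matrix.IsSymm, Matrix.transpose_smul, (psd_symm h)]
  · intro x
    rw [Matrix.smul_mulVec, dotProduct_smul, smul_eq_mul]
    exact mul_nonneg hc (psd_quad h x)

lemma psd_add {M N : Matrix (Fin 3) (Fin 3) ℝ} (hM : M.PosSemidef)
    (hN : N.PosSemidef) : (M + N).PosSemidef := by
  apply psd_of
  · rw [Matrix.IsSymm, Matrix.transpose_add, (psd_symm hM), (psd_symm hN)]
  · intro x
    rw [Matrix.add_mulVec, dotProduct_add]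
    exact add_nonneg (psd_quad hM x) (psd_quad hN x)

lemma convex_FV (κm κp μm μp : ℝ) : Convex ℝ (FV κm κp μm μp) := by
  rintro ⟨u, P⟩ ⟨⟨hu0, hu1⟩, hPs, hP1, hP2⟩ ⟨w, Q⟩ ⟨⟨hw0, hw1⟩, hQs, hQ1, hQ2⟩
    a b ha hb hab
  obtain rfl : b = 1 - a := by linarith
  refine ⟨⟨?_, ?_⟩, ?_, ?_, ?_⟩
  · show (0:ℝ) ≤ a * u + (1 - a) * w
    have := mul_nonneg ha hu0
    have := mul_nonneg hb hw0
    nlinarith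
  · show a * u + (1 - a) * w ≤ 1
    nlinarith
  · show (a • P + (1 - a) • Q).IsSymm
    rw [Matrix.IsSymm, Matrix.transpose_add, Matrix.transpose_smul,
      Matrix.transpose_smul, hPs, hQs]
  · have hEq : (a • P + (1 - a) • Q : Matrix (Fin 3) (Fin 3) ℝ) - KM κm μm
        = a • (P - KM κm μm) + (1 - a) • (Q - KM κm μm) := by
      ext i j
      simp [Matrix.add_apply, Matrix.sub_apply, Matrix.smul_apply, smul_eq_mul]
      ring
    show ((a • P + (1 - a) • Q : Matrix (Fin 3) (Fin 3) ℝ) - KM κm μm).PosSemidef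
    rw [hEq]
    exact psd_add (psd_smul hP1 ha) (psd_smul hQ1 hb)
  · have hEq : (1 - (a * u + (1 - a) * w)) • KM κm μm
        + (a * u + (1 - a) * w) • KM κp μp - (a • P + (1 - a) • Q)
        = a • ((1 - u) • KM κm μm + u • KM κp μp - P)
          + (1 - a) • ((1 - w) • KM κm μm + w • KM κp μp - Q) := by
      ext i j
      simp [Matrix.add_apply, Matrix.sub_apply, Matrix.smul_apply, smul_eq_mul]
      ring
    show ((1 - (a • (u, P) + (1 - a) • (w, Q) : ℝ × Matrix (Fin 3) (Fin 3) ℝ).1)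
        • KM κm μm + (a • (u, P) + (1 - a) • (w, Q) :
          ℝ × Matrix (Fin 3) (Fin 3) ℝ).1 • KM κp μp
        - (a • (u, P) + (1 - a) • (w, Q) : ℝ × Matrix (Fin 3) (Fin 3) ℝ).2).PosSemidef
    simp only [Prod.fst_add, Prod.snd_add, Prod.smul_fst, Prod.smul_snd, smul_eq_mul]
    rw [hEq]
    exact psd_add (psd_smul hP2 ha) (psd_smul hQ2 hb)



lemma energy_le_iso {M A : Matrix (Fin 3) (Fin 3) ℝ} (h : (M - A).PosSemidef)
    (e : Fin 3 → ℝ) : dotProduct e (A *ᵥ e) ≤ dotProduct e (M *ᵥ e) := by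
  have := psd_quad h e
  rw [Matrix.sub_mulVec, dotProduct_sub] at this
  linarith

lemma quad_iso_constr (κ μ : ℝ) (e : Fin 3 → ℝ)
    (hc : (e 0) ^ 2 + (e 1) ^ 2 + (e 2) ^ 2 = 1 / 2) :
    dotProduct e ((KM κ μ) *ᵥ e) = κ * |e 0 + e 1| ^ 2 + μ * (1 - |e 0 + e 1| ^ 2) := by
  rw [quad_KM, sq_abs]
  linear_combination (2*μ) * hc

lemma mem_FHS_zero (κm κp μm μp : ℝ) (hκm : 0 < κm) (hκ : κm < κp)
    (hμm : 0 < μm) (hμ : μm < μp) (A : Matrix (Fin 3) (Fin 3) ℝ)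
    (hsym : A.IsSymm) (hlo : (A - KM κm μm).PosSemidef)
    (hhi : (KM κm μm - A).PosSemidef) : ((0:ℝ), A) ∈ FHS κm κp μm μp := by
  refine ⟨⟨le_refl _, zero_le_one⟩, hsym, hlo, ?_⟩
  intro e he
  have h1 : dotProduct e (A *ᵥ e) ≤ dotProduct e ((KM κm μm) *ᵥ e) :=
    energy_le_iso hhi e
  rw [quad_iso_constr κm μm e he] at h1
  unfold fHS
  rw [qHS_zero κm κp μm μp _ hκ hμ hκm hμm (abs_nonneg _)]
  simp only []
  calc dotProduct e (A *ᵥ e)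
      ≤ κm * |e 0 + e 1| ^ 2 + μm * (1 - |e 0 + e 1| ^ 2) := h1
    _ = (κm + 0 * (κp - κm)) * |e 0 + e 1| ^ 2
        + (μm + 0 * (μp - μm)) * (1 - |e 0 + e 1| ^ 2) - 0 := by ring

lemma mem_FHS_one (κm κp μm μp : ℝ) (hκm : 0 < κm) (hκ : κm < κp)
    (hμm : 0 < μm) (hμ : μm < μp) (B : Matrix (Fin 3) (Fin 3) ℝ)
    (hsym : B.IsSymm) (hlo : (B - KM κm μm).PosSemidef)
    (hhi : (KM κp μp - B).PosSemidef) : ((1:ℝ), B) ∈ FHS κm κp μm μp := by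
  refine ⟨⟨zero_le_one, le_refl _⟩, hsym, hlo, ?_⟩
  intro e he
  have h1 : dotProduct e (B *ᵥ e) ≤ dotProduct e ((KM κp μp) *ᵥ e) :=
    energy_le_iso hhi e
  rw [quad_iso_constr κp μp e he] at h1
  unfold fHS
  rw [qHS_one]
  calc dotProduct e (B *ᵥ e)
      ≤ κp * |e 0 + e 1| ^ 2 + μp * (1 - |e 0 + e 1| ^ 2) := h1
    _ = (κm + 1 * (κp - κm)) * |e 0 + e 1| ^ 2
        + (μm + 1 * (μp - μm)) * (1 - |e 0 + e 1| ^ 2) - 0 := by ring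

lemma FHS_subset_FV (κm κp μm μp : ℝ) (hκm : 0 < κm) (hκ : κm < κp)
    (hμm : 0 < μm) (hμ : μm < μp) : FHS κm κp μm μp ⊆ FV κm κp μm μp := by
  rintro ⟨v, A⟩ ⟨⟨hv0, hv1⟩, hsym, hlo, hbound⟩
  simp only at hv0 hv1 hsym hlo hbound
  refine ⟨⟨hv0, hv1⟩, hsym, hlo, ?_⟩
  show ((1 - v) • KM κm μm + v • KM κp μp - A).PosSemidef
  apply psd_of
  · rw [Matrix.IsSymm, Matrix.transpose_sub, Matrix.transpose_add,
      Matrix.transpose_smul, Matrix.transpose_smul, hsym,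
      KM_isSymm κm μm, KM_isSymm κp μp]
  intro x
  -- quadratic form expansion
  have expand : ∀ y : Fin 3 → ℝ,
      dotProduct y (((1 - v) • KM κm μm + v • KM κp μp - A) *ᵥ y)
        = (1 - v) * dotProduct y ((KM κm μm) *ᵥ y)
          + v * dotProduct y ((KM κp μp) *ᵥ y) - dotProduct y (A *ᵥ y) := by
    intro y
    rw [Matrix.sub_mulVec, Matrix.add_mulVec, Matrix.smul_mulVec,
      Matrix.smul_mulVec, dotProduct_sub, dotProduct_add,
      dotProduct_smul, dotProduct_smul, smul_eq_mul, smul_eq_mul]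
  have key : ∀ e : Fin 3 → ℝ, (e 0) ^ 2 + (e 1) ^ 2 + (e 2) ^ 2 = 1 / 2 →
      0 ≤ dotProduct e (((1 - v) • KM κm μm + v • KM κp μp - A) *ᵥ e) := by
    intro e he
    have hb := hbound e he
    set t := |e 0 + e 1| with htdef
    have ht0 : 0 ≤ t := abs_nonneg _
    have ht1 : t ≤ 1 := by
      rw [htdef]
      rw [abs_le]
      constructor <;> nlinarith [sq_nonneg (e 0 - e 1), sq_nonneg (e 0 + e 1), sq_nonneg (e 2)]
    have hq := qHS_nonneg κm κp μm μp t v hκm hκ hμm hμ ht0 ht1 hv0 hv1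
    have hf : fHS κm κp μm μp t v
        ≤ (κm + v * (κp - κm)) * t ^ 2 + (μm + v * (μp - μm)) * (1 - t ^ 2) := by
      unfold fHS; linarith
    rw [expand e, quad_iso_constr κm μm e he, quad_iso_constr κp μp e he]
    have : dotProduct e (A *ᵥ e)
        ≤ (κm + v * (κp - κm)) * t ^ 2 + (μm + v * (μp - μm)) * (1 - t ^ 2) :=
      le_trans hb hf
    rw [htdef] at this
    nlinarith [this]
  rcases eq_or_ne x 0 with rfl | hx
  · simp
  · have hr : 0 < (x 0) ^ 2 + (x 1) ^ 2 + (x 2) ^ 2 := by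
      rcases lt_or_ge 0 ((x 0) ^ 2 + (x 1) ^ 2 + (x 2) ^ 2) with h | h
      · exact h
      exfalso
      apply hx
      have h0 : x 0 = 0 := by
        have : x 0 ^ 2 = 0 := by nlinarith [sq_nonneg (x 0), sq_nonneg (x 1), sq_nonneg (x 2)]
        exact (pow_eq_zero_iff two_ne_zero).mp this
      have h1 : x 1 = 0 := by
        have : x 1 ^ 2 = 0 := by nlinarith [sq_nonneg (x 0), sq_nonneg (x 1), sq_nonneg (x 2)]
        exact (pow_eq_zero_iff two_ne_zero).mp this
      have h2 : x 2 = 0 := by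
        have : x 2 ^ 2 = 0 := by nlinarith [sq_nonneg (x 0), sq_nonneg (x 1), sq_nonneg (x 2)]
        exact (pow_eq_zero_iff two_ne_zero).mp this
      funext i
      fin_cases i
      · simpa using h0
      · simpa using h1
      · simpa using h2
    set r := (x 0) ^ 2 + (x 1) ^ 2 + (x 2) ^ 2 with hrdef
    set c := (Real.sqrt (2 * r))⁻¹ with hcdef
    have h2r : (0:ℝ) < 2 * r := by linarith
    have hcsq : c ^ 2 = 1 / (2 * r) := by
      rw [hcdef, ← one_div, div_pow, one_pow, Real.sq_sqrt h2r.le]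
    have hc0 : 0 < c := by
      rw [hcdef]
      exact inv_pos.mpr (Real.sqrt_pos.mpr h2r)
    have hcon : ((c • x) 0) ^ 2 + ((c • x) 1) ^ 2 + ((c • x) 2) ^ 2 = 1 / 2 := by
      simp only [Pi.smul_apply, smul_eq_mul, mul_pow]
      field_simp at hcsq ⊢
      nlinarith [hcsq]
    have hk := key (c • x) hcon
    have hscale : dotProduct (c • x) (((1 - v) • KM κm μm + v • KM κp μp - A) *ᵥ (c • x))
        = c ^ 2 * dotProduct x (((1 - v) • KM κm μm + v • KM κp μp - A) *ᵥ x) := by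
      rw [Matrix.mulVec_smul, smul_dotProduct, dotProduct_smul]
      simp [smul_eq_mul]; ring
    rw [hscale] at hk
    nlinarith [hk, pow_pos hc0 2]

lemma FV_subset_hull (κm κp μm μp : ℝ) (hκm : 0 < κm) (hκ : κm < κp)
    (hμm : 0 < μm) (hμ : μm < μp) :
    FV κm κp μm μp ⊆ convexHull ℝ (FHS κm κp μm μp) := by
  rintro ⟨v, A⟩ ⟨⟨hv0, hv1⟩, hsym, hlo, hhi⟩
  simp only at hv0 hv1 hsym hlo hhi
  rcases eq_or_lt_of_le hv0 with hv | hv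
  · -- v = 0
    obtain rfl : v = 0 := hv.symm
    apply subset_convexHull
    have hEq : ((1:ℝ) - 0) • KM κm μm + (0:ℝ) • KM κp μp - A = KM κm μm - A := by
      ext i j; simp
    rw [hEq] at hhi
    exact mem_FHS_zero κm κp μm μp hκm hκ hμm hμ A hsym hlo hhi
  · -- 0 < v
    set B := KM κm μm + v⁻¹ • (A - KM κm μm) with hBdef
    have hvne : v ≠ 0 := ne_of_gt hv
    have hBsym : B.IsSymm := by
      rw [hBdef, Matrix.IsSymm, Matrix.transpose_add, Matrix.transpose_smul,
        Matrix.transpose_sub, hsym, KM_isSymm κm μm]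
    have hBlo : (B - KM κm μm).PosSemidef := by
      have : B - KM κm μm = v⁻¹ • (A - KM κm μm) := by rw [hBdef]; ext i j; simp
      rw [this]
      exact psd_smul hlo (inv_nonneg.mpr hv0)
    have hBhi : (KM κp μp - B).PosSemidef := by
      have : KM κp μp - B = v⁻¹ • ((1 - v) • KM κm μm + v • KM κp μp - A) := by
        rw [hBdef]; ext i j
        simp only [Matrix.sub_apply, Matrix.add_apply, Matrix.smul_apply, smul_eq_mul]
        field_simp
        ring
      rw [this]
      exact psd_smul hhi (inv_nonneg.mpr hv0)
    have h0 : ((0:ℝ), KM κm μm) ∈ FHS κm κp μm μp := by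
      apply mem_FHS_zero κm κp μm μp hκm hκ hμm hμ _ (KM_isSymm κm μm)
      · have : KM κm μm - KM κm μm = (0 : Matrix (Fin 3) (Fin 3) ℝ) := sub_self _
        rw [this]
        exact psd_of _ (by rw [Matrix.IsSymm, Matrix.transpose_zero]) (fun x => by simp)
      · have : KM κm μm - KM κm μm = (0 : Matrix (Fin 3) (Fin 3) ℝ) := sub_self _
        rw [this]
        exact psd_of _ (by rw [Matrix.IsSymm, Matrix.transpose_zero]) (fun x => by simp)
    have h1 : ((1:ℝ), B) ∈ FHS κm κp μm μp :=
      mem_FHS_one κm κp μm μp hκm hκ hμm hμ B hBsym hBlo hBhi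
    have hcomb : ((v, A) : ℝ × Matrix (Fin 3) (Fin 3) ℝ)
        = (1 - v) • ((0:ℝ), KM κm μm) + v • ((1:ℝ), B) := by
      refine Prod.ext ?_ ?_
      · simp
      · show A = (1 - v) • KM κm μm + v • B
        rw [hBdef]; ext i j
        simp only [Matrix.add_apply, Matrix.smul_apply, Matrix.sub_apply, smul_eq_mul]
        field_simp
        ring
    rw [hcomb]
    exact (convex_convexHull ℝ (FHS κm κp μm μp))
      (subset_convexHull ℝ _ h0) (subset_convexHull ℝ _ h1)
      (by linarith) hv0 (by ring)

/-- The convex hull of the Hashin–Shtrikman feasible set equals the Voigt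
feasible set. -/
theorem hs_convex_hull_eq_voigt
    (κm κp μm μp : ℝ) (hκm : 0 < κm) (hκ : κm < κp) (hμm : 0 < μm) (hμ : μm < μp) :
    convexHull ℝ (FHS κm κp μm μp) = FV κm κp μm μp := by
  apply Set.Subset.antisymm
  · exact convexHull_min (FHS_subset_FV κm κp μm μp hκm hκ hμm hμ) (convex_FV κm κp μm μp)
  · exact FV_subset_hull κm κp μm μp hκm hκ hμm hμ
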